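/- arXiv:2604.25028 — 6 statements merged into one kernel-verified Lean document; each statement's English description precedes it below -/
import Mathlib

section
/- Let X be a Polish space with its Borel sigma-algebra, and let mu be a finite Borel measure on X. Every analytic subset of X is measurable with respect to the completion of mu (i.e., it is a null-measurable set for mu). -/
open MeasureTheory Set Filter Topology
open scoped ENNReal NNReal

namespace AnalyticNullMeasurableAux

/-- The set of sequences whose first `k` values are bounded by `g`. -/
def B (g : ℕ → ℕ) (k : ℕ) : Set (ℕ → ℕ) := {x | ∀ i < k, x i ≤ g i}

lemma B_update (g : ℕ → ℕ) (k m : ℕ) :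
    B (Function.update g k m) (k + 1) = B g k ∩ {x | x k ≤ m} := by
  ext x
  constructor
  · intro h
    refine ⟨fun i hik => ?_, ?_⟩
    · have := h i (hik.trans (Nat.lt_succ_self k))
      rwa [Function.update_of_ne hik.ne] at this
    · have := h k (Nat.lt_succ_self k)
      rwa [Function.update_self] at this
  · rintro ⟨h1, h2⟩ i hik
    rcases Nat.lt_succ_iff_lt_or_eq.mp hik with h | rfl
    · rw [Function.update_of_ne h.ne]; exact h1 i h
    · rwa [Function.update_self]

lemma geom_sum_le (ε : ℝ≥0∞) (k : ℕ) :
    ∑ i ∈ Finset.range k, ε / 2 / 2 ^ i ≤ ε := by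
  have h1 : ∀ i : ℕ, ε / 2 / 2 ^ i = ε / 2 * 2⁻¹ ^ i := by
    intro i
    rw [div_eq_mul_inv, ENNReal.inv_pow]
  calc ∑ i ∈ Finset.range k, ε / 2 / 2 ^ i
      ≤ ∑' i : ℕ, ε / 2 / 2 ^ i := ENNReal.sum_le_tsum _
    _ = ε / 2 * ∑' i : ℕ, 2⁻¹ ^ i := by simp_rw [h1]; exact ENNReal.tsum_mul_left
    _ = ε / 2 * 2 := by rw [ENNReal.tsum_geometric, ENNReal.one_sub_inv_two, inv_inv]
    _ = ε := ENNReal.div_mul_cancel two_ne_zero ENNReal.ofNat_ne_top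

lemma eps_ne_zero {ε : ℝ≥0∞} (hε : ε ≠ 0) (k : ℕ) : ε / 2 / 2 ^ k ≠ 0 := by
  have h2 : (2 : ℝ≥0∞) ^ k ≠ ⊤ := ENNReal.pow_ne_top ENNReal.ofNat_ne_top
  simp [ENNReal.div_eq_zero_iff, hε, h2, ENNReal.ofNat_ne_top]

/-- Capacitability: a continuous image of Baire space contains compact subsets of
almost full outer measure. -/
lemma exists_compact {X : Type*} [TopologicalSpace X] [PolishSpace X]
    [MeasurableSpace X] [BorelSpace X]
    (μ : Measure X) [IsFiniteMeasure μ]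
    (f : (ℕ → ℕ) → X) (hf : Continuous f) {ε : ℝ≥0∞} (hε : ε ≠ 0) :
    ∃ K : Set X, IsCompact K ∧ K ⊆ Set.range f ∧ μ (Set.range f) ≤ μ K + ε := by
  rcases eq_or_ne ε ⊤ with rfl | hεtop
  · exact ⟨∅, isCompact_empty, empty_subset _, by simp⟩
  letI := TopologicalSpace.upgradeIsCompletelyMetrizable X
  -- Step: enlarge a prefix-bound by one coordinate, losing little outer measure.
  have step : ∀ (g : ℕ → ℕ) (k : ℕ), ∃ m : ℕ,
      μ (f '' B g k) ≤ μ (f '' B (Function.update g k m) (k + 1)) + ε / 2 / 2 ^ k := by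
    intro g k
    have hU : ⋃ m : ℕ, (B g k ∩ {x | x k ≤ m}) = B g k := by
      apply Subset.antisymm (iUnion_subset fun m => inter_subset_left)
      intro x hx
      exact mem_iUnion.2 ⟨x k, hx, show x k ≤ x k from le_rfl⟩
    have hmono : Monotone fun m : ℕ => f '' (B g k ∩ {x | x k ≤ m}) := by
      intro m m' hmm'
      exact image_mono (inter_subset_inter_right _ fun x hx => hx.trans hmm')
    have hsup : μ (f '' B g k) = ⨆ m : ℕ, μ (f '' (B g k ∩ {x | x k ≤ m})) := by
      conv_lhs => rw [← hU, image_iUnion]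
      exact hmono.measure_iUnion
    by_contra hcon
    push_neg at hcon
    simp only [B_update] at hcon
    set S := μ (f '' B g k) with hS
    have hS0 : S ≠ 0 := (zero_le.trans_lt (hcon 0)).ne'
    have hle : ∀ m : ℕ, μ (f '' (B g k ∩ {x | x k ≤ m})) ≤ S - ε / 2 / 2 ^ k := fun m =>
      ENNReal.le_sub_of_add_le_right
        (ENNReal.div_lt_top (ENNReal.div_lt_top hεtop two_ne_zero).ne
          (pow_ne_zero _ two_ne_zero)).ne (hcon m).le
    have : S ≤ S - ε / 2 / 2 ^ k := hsup.trans_le (iSup_le hle)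
    exact absurd (this.trans_lt (ENNReal.sub_lt_self (measure_ne_top μ _) hS0
      (eps_ne_zero hε k))) (lt_irrefl _)
  choose M hM using step
  -- Recursively built bounds.
  let G : ℕ → ℕ → ℕ := fun k =>
    Nat.rec (fun _ => 0) (fun k g => Function.update g k (M g k)) k
  set n : ℕ → ℕ := fun i => G (i + 1) i with hn
  have hGsucc : ∀ k, G (k + 1) = Function.update (G k) k (M (G k) k) := fun k => rfl
  have hGn : ∀ k, ∀ i < k, G k i = n i := by
    intro k
    induction k with
    | zero => intro i h; exact absurd h (Nat.not_lt_zero i)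
    | succ k ih =>
      intro i hik
      rcases Nat.lt_succ_iff_lt_or_eq.mp hik with h | rfl
      · rw [hGsucc k, Function.update_of_ne h.ne, ih i h]
      · rfl
  set Bn : ℕ → Set (ℕ → ℕ) := fun k => {x | ∀ i < k, x i ≤ n i} with hBn
  have hBG : ∀ k, B (G k) k = Bn k := by
    intro k
    ext x
    constructor
    · intro h i hik; rw [← hGn k i hik]; exact h i hik
    · intro h i hik; rw [hGn k i hik]; exact h i hik
  have hstep2 : ∀ k, μ (f '' Bn k) ≤ μ (f '' Bn (k + 1)) + ε / 2 / 2 ^ k := by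
    intro k
    have h1 := hM (G k) k
    rw [hBG k] at h1
    have h2 : B (Function.update (G k) k (M (G k) k)) (k + 1) = Bn (k + 1) := by
      rw [← hGsucc k]; exact hBG (k + 1)
    rwa [h2] at h1
  have hchain : ∀ k, μ (f '' Bn 0) ≤ μ (f '' Bn k) + ∑ i ∈ Finset.range k, ε / 2 / 2 ^ i := by
    intro k
    induction k with
    | zero => simp
    | succ k ih =>
      calc μ (f '' Bn 0) ≤ μ (f '' Bn k) + ∑ i ∈ Finset.range k, ε / 2 / 2 ^ i := ih
        _ ≤ (μ (f '' Bn (k + 1)) + ε / 2 / 2 ^ k) + ∑ i ∈ Finset.range k, ε / 2 / 2 ^ i :=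
            add_le_add_left (hstep2 k) _
        _ = μ (f '' Bn (k + 1)) + ∑ i ∈ Finset.range (k + 1), ε / 2 / 2 ^ i := by
            rw [Finset.sum_range_succ, add_assoc, add_comm (ε / 2 / 2 ^ k)]
  have hBn0 : Bn 0 = univ := by
    ext x; simp [hBn]
  have hchain' : ∀ k, μ (Set.range f) ≤ μ (f '' Bn k) + ε := by
    intro k
    have := (hchain k).trans (add_le_add_right (geom_sum_le ε k) _)
    rwa [hBn0, image_univ] at this
  -- The compact set.
  set C : Set (ℕ → ℕ) := Set.pi univ fun i => Set.Iic (n i) with hC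
  have hCc : IsCompact C := isCompact_univ_pi fun i => (Set.finite_Iic (n i)).isCompact
  refine ⟨f '' C, hCc.image hf, image_subset_range f C, ?_⟩
  set D : ℕ → Set X := fun k => closure (f '' Bn k) with hD
  have hBnanti : Antitone Bn := fun k k' h x hx i hik => hx i (lt_of_lt_of_le hik h)
  have hDanti : Antitone D := fun k k' h => closure_mono (image_mono (hBnanti h))
  -- Key inclusion: the decreasing closures squeeze into the compact image.
  have hInt : ⋂ k, D k ⊆ f '' C := by
    intro y hy
    have hz : ∀ k : ℕ, ∃ x ∈ Bn k, dist y (f x) < 1 / (k + 1) := by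
      intro k
      have hyk : y ∈ closure (f '' Bn k) := mem_iInter.mp hy k
      have hpos : (0 : ℝ) < 1 / (k + 1) := by positivity
      rcases Metric.mem_closure_iff.mp hyk _ hpos with ⟨b, hb, hbd⟩
      rcases hb with ⟨x, hx, rfl⟩
      exact ⟨x, hx, hbd⟩
    choose z hzB hzd using hz
    set w : ℕ → ℕ → ℕ := fun k i => min (z k i) (n i) with hwdef
    have hwC : ∀ k, w k ∈ C := by
      intro k i _
      exact Set.mem_Iic.2 (min_le_right _ _)
    obtain ⟨a, haC, φ, hφ, hconv⟩ := hCc.isSeqCompact hwC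
    have hzconv : Tendsto (fun j => z (φ j)) atTop (𝓝 a) := by
      rw [tendsto_pi_nhds] at hconv ⊢
      intro i
      refine (hconv i).congr' ?_
      filter_upwards [eventually_gt_atTop i] with j hij
      have hiφ : i < φ j := hij.trans_le hφ.le_apply
      exact min_eq_left (hzB (φ j) i hiφ)
    have h1 : Tendsto (fun j => f (z (φ j))) atTop (𝓝 (f a)) :=
      (hf.tendsto a).comp hzconv
    have h2 : Tendsto (fun k => f (z k)) atTop (𝓝 y) := by
      rw [tendsto_iff_dist_tendsto_zero]
      refine squeeze_zero (fun k => dist_nonneg) (fun k => ?_)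
        tendsto_one_div_add_atTop_nhds_zero_nat
      rw [dist_comm]
      exact (hzd k).le
    have h2' : Tendsto (fun j => f (z (φ j))) atTop (𝓝 y) := h2.comp hφ.tendsto_atTop
    exact ⟨a, haC, tendsto_nhds_unique h1 h2'⟩
  have hDm : ∀ k, NullMeasurableSet (D k) μ := fun k =>
    isClosed_closure.measurableSet.nullMeasurableSet
  have hdir : Directed (· ⊇ ·) D := hDanti.directed_ge
  have hIinf : μ (⋂ k, D k) = ⨅ k, μ (D k) :=
    Directed.measure_iInter hDm hdir ⟨0, measure_ne_top μ _⟩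
  calc μ (Set.range f) ≤ ⨅ k, (μ (D k) + ε) :=
        le_iInf fun k => (hchain' k).trans (add_le_add_left (measure_mono subset_closure) ε)
    _ = (⨅ k, μ (D k)) + ε := ENNReal.iInf_add.symm
    _ = μ (⋂ k, D k) + ε := by rw [hIinf]
    _ ≤ μ (f '' C) + ε := add_le_add_left (measure_mono hInt) ε

end AnalyticNullMeasurableAux

/-- Every analytic subset of a Polish space is measurable with respect to the
completion of every finite Borel measure, i.e., it is null-measurable. -/
theorem analytic_nullMeasurableSet
    {X : Type*} [TopologicalSpace X] [PolishSpace X]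
    [MeasurableSpace X] [BorelSpace X]
    (μ : Measure X) [IsFiniteMeasure μ]
    {s : Set X} (hs : MeasureTheory.AnalyticSet s) :
    NullMeasurableSet s μ := by
  letI := TopologicalSpace.upgradeIsCompletelyMetrizable X
  rw [MeasureTheory.AnalyticSet] at hs
  rcases hs with rfl | ⟨f, hf, rfl⟩
  · exact MeasurableSet.empty.nullMeasurableSet
  · have hεne : ∀ m : ℕ, ((m : ℝ≥0∞))⁻¹ ≠ 0 :=
      fun m => ENNReal.inv_ne_zero.2 (ENNReal.natCast_ne_top m)
    choose K hKc hKsub hKle using fun m : ℕ =>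
      AnalyticNullMeasurableAux.exists_compact μ f hf (hεne m)
    set Bu : Set X := ⋃ m, K m with hBu
    have hBm : MeasurableSet Bu :=
      MeasurableSet.iUnion fun m => (hKc m).isClosed.measurableSet
    have hBsub : Bu ⊆ Set.range f := iUnion_subset fun m => hKsub m
    have hle : μ (Set.range f) ≤ μ Bu := by
      refine ENNReal.le_of_forall_pos_le_add fun δ hδ _ => ?_
      obtain ⟨m, hm⟩ := ENNReal.exists_inv_nat_lt
        (show ((δ : ℝ≥0∞)) ≠ 0 by exact_mod_cast hδ.ne')
      exact (hKle m).trans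
        (add_le_add (measure_mono (subset_iUnion K m)) hm.le)
    have hnull : μ (Set.range f \ Bu) = 0 := by
      have h1 : Set.range f \ Bu ⊆ toMeasurable μ (Set.range f) \ Bu :=
        diff_subset_diff_left (subset_toMeasurable μ _)
      have h2 : μ (toMeasurable μ (Set.range f) \ Bu)
          = μ (toMeasurable μ (Set.range f)) - μ Bu :=
        measure_diff (hBsub.trans (subset_toMeasurable μ _)) hBm.nullMeasurableSet
          (measure_ne_top μ _)
      have h3 : μ (toMeasurable μ (Set.range f)) = μ (Set.range f) :=
        measure_toMeasurable _
      have h4 : μ (toMeasurable μ (Set.range f) \ Bu) = 0 := by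
        rw [h2, h3]
        exact tsub_eq_zero_of_le hle
      exact measure_mono_null h1 h4
    have hU : Bu ∪ (Set.range f \ Bu) = Set.range f := union_diff_cancel hBsub
    exact hU ▸ (hBm.nullMeasurableSet.union (NullMeasurableSet.of_null hnull))
end

section
/- Let X be a Polish space with its Borel sigma-algebra, Theta a standard Borel space, and e : Theta × X → Bool jointly measurable. Then the concept class C = {e(theta, ·) : theta in Theta} satisfies the measurable-target well-behavedness condition WB_meas: for every probability measure mu on X, every measurable target c : X → Bool, every m in N, and every epsilon > 0, the one-sided ghost bad event {(S,T) in X^m × X^m : exists h in C, L_T(h,c) − L_S(h,c) ≥ epsilon/2} is measurable in the completion of the product measure mu^{2m}. -/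
open MeasureTheory

/-- Empirical zero-one error of hypothesis `h` against target `c` on the sample `S`
(with the empty-sample average equal to `0` when `m = 0`). -/
noncomputable def empErr {X : Type*} (h c : X → Bool) (m : ℕ) (S : Fin m → X) : ℝ :=
  ((Finset.univ.filter fun i : Fin m => h (S i) ≠ c (S i)).card : ℝ) / m

/-- One-sided ghost gap: ghost empirical error minus training empirical error. -/
noncomputable def ghostGap {X : Type*} (h c : X → Bool) (m : ℕ)
    (p : (Fin m → X) × (Fin m → X)) : ℝ :=
  empErr h c m p.2 - empErr h c m p.1

/-- One-sided ghost bad event of a concept class. -/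
def badEvent {X : Type*} (C : Set (X → Bool)) (c : X → Bool) (m : ℕ) (ε : ℝ) :
    Set ((Fin m → X) × (Fin m → X)) :=
  {p | ∃ h ∈ C, ghostGap h c m p ≥ ε / 2}

/-- The product measure `μ^{2m}` on `X^m × X^m`. -/
noncomputable def prodMeas {X : Type*} [MeasurableSpace X] (μ : Measure X) (m : ℕ) :
    Measure ((Fin m → X) × (Fin m → X)) :=
  (Measure.pi fun _ : Fin m => μ).prod (Measure.pi fun _ : Fin m => μ)

/-- Measurable-target well-behavedness: every one-sided ghost bad event with a
measurable target is measurable in the completion of every product probability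
measure `μ^{2m}`. -/
def WBmeas {X : Type*} [MeasurableSpace X] (C : Set (X → Bool)) : Prop :=
  ∀ (μ : Measure X), IsProbabilityMeasure μ →
    ∀ c : X → Bool, Measurable c → ∀ m : ℕ, ∀ ε : ℝ, 0 < ε →
      NullMeasurableSet (badEvent C c m ε) (prodMeas μ m)

namespace BorelParamAux

open Set Filter Topology

/-- Constraint set: first `k` coordinates bounded by `σ`. -/
def Lset (σ : ℕ → ℕ) (k : ℕ) : Set (ℕ → ℕ) := {x | ∀ i < k, x i ≤ σ i}

lemma Lset_antitone (σ : ℕ → ℕ) : Antitone (Lset σ) :=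
  fun _ _ hkl x hx i hi => hx i (lt_of_lt_of_le hi hkl)

lemma Lset_zero (σ : ℕ → ℕ) : Lset σ 0 = univ := by
  ext x; simp [Lset]

lemma Lset_succ_union (σ : ℕ → ℕ) (k : ℕ) :
    Lset σ k = ⋃ n, Lset (Function.update σ k n) (k + 1) := by
  ext x
  simp only [mem_iUnion]
  constructor
  · intro h
    refine ⟨x k, fun i hi => ?_⟩
    rcases Nat.lt_succ_iff_lt_or_eq.1 hi with h' | rfl
    · rw [Function.update_of_ne h'.ne]; exact h i h'
    · rw [Function.update_self]
  · rintro ⟨n, h⟩ i hi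
    have := h i (hi.trans (Nat.lt_succ_self k))
    rwa [Function.update_of_ne hi.ne] at this

lemma Lset_update_mono (σ : ℕ → ℕ) (k : ℕ) :
    Monotone fun n => Lset (Function.update σ k n) (k + 1) := by
  intro n n' hnn x hx i hi
  have hxi := hx i hi
  by_cases hik : i = k
  · subst hik
    rw [Function.update_self] at hxi ⊢
    exact hxi.trans hnn
  · rwa [Function.update_of_ne hik] at hxi ⊢

lemma iInter_closure_subset {α : Type*} [TopologicalSpace α] [T2Space α]
    {f : (ℕ → ℕ) → α} (hf : Continuous f) (σ : ℕ → ℕ) :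
    (⋂ k, closure (f '' Lset σ k)) ⊆ f '' {x | ∀ i, x i ≤ σ i} := by
  intro y hy
  set F : ℕ → Filter (ℕ → ℕ) := fun k => Filter.comap f (𝓝 y) ⊓ 𝓟 (Lset σ k) with hF
  have hFne : ∀ k, (F k).NeBot := by
    intro k
    rw [hF]
    rw [Filter.inf_principal_neBot_iff]
    intro U hU
    rcases hU with ⟨V, hV, hVU⟩
    have hyk : y ∈ closure (f '' Lset σ k) := mem_iInter.1 hy k
    rcases mem_closure_iff_nhds.1 hyk V hV with ⟨w, hwV, x, hxL, rfl⟩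
    exact ⟨x, hVU hwV, hxL⟩
  have hdir : Directed (· ≥ ·) F := by
    refine Antitone.directed_ge fun k l hkl => ?_
    exact inf_le_inf le_rfl (principal_mono.2 (Lset_antitone σ hkl))
  haveI : (⨅ k, F k).NeBot := Filter.iInf_neBot_of_directed hdir hFne
  set U := Ultrafilter.of (⨅ k, F k) with hU
  have hUle : (U : Filter (ℕ → ℕ)) ≤ ⨅ k, F k := Ultrafilter.of_le _
  have hcoord : ∀ i : ℕ, ∃ n, n ∈ Iic (σ i) ∧
      Tendsto (fun x : ℕ → ℕ => x i) U (𝓝 n) := by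
    intro i
    have h1 : Lset σ (i + 1) ∈ U :=
      le_principal_iff.1 ((hUle.trans (iInf_le _ (i + 1))).trans inf_le_right)
    have h2 : Iic (σ i) ∈ U.map fun x : ℕ → ℕ => x i :=
      mem_map.2 (mem_of_superset h1 fun x hx => hx i (Nat.lt_succ_self i))
    rcases ((Set.finite_Iic (σ i)).isCompact).ultrafilter_le_nhds (U.map _)
      (le_principal_iff.2 h2) with ⟨n, hn, hle⟩
    exact ⟨n, hn, hle⟩
  choose g hg1 hg2 using hcoord
  have hgx : Tendsto id (U : Filter (ℕ → ℕ)) (𝓝 g) := tendsto_pi_nhds.2 fun i => hg2 i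
  have h1 : Tendsto f (U : Filter (ℕ → ℕ)) (𝓝 (f g)) := (hf.tendsto g).comp hgx
  have h2 : Tendsto f (U : Filter (ℕ → ℕ)) (𝓝 y) :=
    tendsto_iff_comap.2 ((hUle.trans (iInf_le _ 0)).trans inf_le_left)
  exact ⟨g, fun i => hg1 i, tendsto_nhds_unique h1 h2⟩

lemma exists_isCompact_subset_measure {α : Type*} [TopologicalSpace α] [T2Space α]
    [MeasurableSpace α] [OpensMeasurableSpace α]
    {f : (ℕ → ℕ) → α} (hf : Continuous f) (μ : Measure α) [IsFiniteMeasure μ]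
    {ε : ENNReal} (hε : ε ≠ 0) :
    ∃ K, IsCompact K ∧ K ⊆ Set.range f ∧ μ (Set.range f) ≤ μ K + ε := by
  set c := μ (Set.range f) with hcdef
  have hc : c ≠ ⊤ := measure_ne_top μ _
  have step : ∀ (σ : ℕ → ℕ) (k : ℕ), c < μ (f '' Lset σ k) + ε →
      ∃ n, c < μ (f '' Lset (Function.update σ k n) (k + 1)) + ε := by
    intro σ k hk
    have hun : f '' Lset σ k = ⋃ n, f '' Lset (Function.update σ k n) (k + 1) := by
      rw [Lset_succ_union σ k, image_iUnion]
    have hmono : Monotone fun n => f '' Lset (Function.update σ k n) (k + 1) :=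
      fun n n' h => Set.image_mono (Lset_update_mono σ k h)
    rw [hun, hmono.measure_iUnion, ENNReal.iSup_add] at hk
    exact lt_iSup_iff.1 hk
  have base : c < μ (f '' Lset (fun _ => 0) 0) + ε := by
    rw [Lset_zero, image_univ]
    exact ENNReal.lt_add_right hc hε
  let s : (k : ℕ) → {σ : ℕ → ℕ // c < μ (f '' Lset σ k) + ε} := fun k =>
    Nat.rec ⟨fun _ => 0, base⟩
      (fun k ih => ⟨Function.update ih.1 k (step ih.1 k ih.2).choose,
        (step ih.1 k ih.2).choose_spec⟩) k
  have hsucc : ∀ k, (s (k + 1)).1 = Function.update (s k).1 k (step (s k).1 k (s k).2).choose :=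
    fun _ => rfl
  have hconsist : ∀ i k, i < k → (s k).1 i = (s (i + 1)).1 i := by
    intro i k
    induction k with
    | zero => omega
    | succ k ih =>
      intro hik
      rcases Nat.lt_succ_iff_lt_or_eq.1 hik with h | h
      · rw [hsucc k, Function.update_of_ne (by omega : i ≠ k), ih h]
      · subst h; rfl
  set σ : ℕ → ℕ := fun i => (s (i + 1)).1 i with hσ
  have hL : ∀ k, Lset σ k = Lset (s k).1 k := by
    intro k
    unfold Lset
    ext x
    simp only [mem_setOf_eq]
    refine forall₂_congr fun i hi => ?_
    rw [show σ i = (s k).1 i from (hconsist i k hi).symm]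
  have hinv : ∀ k, c < μ (f '' Lset σ k) + ε := fun k => by rw [hL k]; exact (s k).2
  set M : Set (ℕ → ℕ) := {x | ∀ i, x i ≤ σ i} with hM
  have hMc : IsCompact M := by
    have hMpi : M = Set.pi univ fun i => Iic (σ i) := by
      ext x; simp [hM, Set.mem_pi, Pi.le_def]
    rw [hMpi]
    exact isCompact_univ_pi fun i => (Set.finite_Iic (σ i)).isCompact
  refine ⟨f '' M, hMc.image hf, image_subset_range f M, ?_⟩
  have hsubset : (⋂ k, closure (f '' Lset σ k)) ⊆ f '' M := iInter_closure_subset hf σ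
  have hanti : Antitone fun k => closure (f '' Lset σ k) :=
    fun k l h => closure_mono (Set.image_mono (Lset_antitone σ h))
  have hmeasInter : μ (⋂ k, closure (f '' Lset σ k)) = ⨅ k, μ (closure (f '' Lset σ k)) :=
    Directed.measure_iInter
      (fun k => isClosed_closure.measurableSet.nullMeasurableSet)
      hanti.directed_ge ⟨0, measure_ne_top μ _⟩
  have hlow : ∀ k, c - ε ≤ μ (closure (f '' Lset σ k)) := fun k =>
    le_trans (tsub_le_iff_right.2 (hinv k).le) (measure_mono subset_closure)
  calc c ≤ (c - ε) + ε := le_tsub_add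
    _ ≤ μ (⋂ k, closure (f '' Lset σ k)) + ε := by
        rw [hmeasInter]; exact add_le_add_left (le_iInf hlow) ε
    _ ≤ μ (f '' M) + ε := add_le_add_left (measure_mono hsubset) ε

theorem analyticSet_nullMeasurableSet {α : Type*} [TopologicalSpace α] [PolishSpace α]
    [MeasurableSpace α] [BorelSpace α] {s : Set α} (hs : AnalyticSet s)
    (μ : Measure α) [IsFiniteMeasure μ] : NullMeasurableSet s μ := by
  rw [AnalyticSet_def] at hs
  rcases hs with rfl | ⟨f, hf, rfl⟩
  · exact MeasurableSet.empty.nullMeasurableSet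
  have hK : ∀ n : ℕ, ∃ K, IsCompact K ∧ K ⊆ Set.range f ∧
      μ (Set.range f) ≤ μ K + ((n : ENNReal) + 1)⁻¹ := by
    intro n
    refine exists_isCompact_subset_measure hf μ ?_
    simp [ENNReal.inv_ne_zero]
  choose K hKc hKs hKm using hK
  set t := ⋃ n, K n with ht
  have htm : MeasurableSet t := MeasurableSet.iUnion fun n => (hKc n).isClosed.measurableSet
  have hts : t ⊆ Set.range f := iUnion_subset hKs
  have hμt : μ (Set.range f) ≤ μ t := by
    refine ENNReal.le_of_forall_pos_le_add fun δ hδ _ => ?_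
    obtain ⟨n, hn⟩ := ENNReal.exists_inv_nat_lt (show (δ : ENNReal) ≠ 0 by
      exact_mod_cast hδ.ne')
    calc μ (Set.range f) ≤ μ (K n) + ((n : ENNReal) + 1)⁻¹ := hKm n
      _ ≤ μ t + δ := by
          refine add_le_add (measure_mono (subset_iUnion K n)) ?_
          refine le_trans ?_ hn.le
          exact ENNReal.inv_le_inv.2 (le_add_right le_rfl)
  set u := toMeasurable μ (Set.range f) with hu
  have hsu : Set.range f ⊆ u := subset_toMeasurable μ _
  have h0 : μ (u \ t) = 0 := by
    have hut : μ u = μ (Set.range f) := measure_toMeasurable _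
    rw [measure_diff (hts.trans hsu) htm.nullMeasurableSet (measure_ne_top μ t), hut]
    exact tsub_eq_zero_iff_le.2 hμt
  have hdecomp : Set.range f = t ∪ (Set.range f \ t) := (union_diff_cancel hts).symm
  rw [hdecomp]
  exact htm.nullMeasurableSet.union
    (NullMeasurableSet.of_null (measure_mono_null (diff_subset_diff_left hsu) h0))

end BorelParamAux


/-- Borel–analytic bridge: every Borel-parameterized concept class satisfies the
measurable-target well-behavedness condition `WBmeas`. -/

theorem borel_param_WBmeas
    {X : Type*} [TopologicalSpace X] [PolishSpace X] [MeasurableSpace X] [BorelSpace X]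
    {Θ : Type*} [MeasurableSpace Θ] [StandardBorelSpace Θ]
    (e : Θ × X → Bool) (he : Measurable e) :
    WBmeas (Set.range fun θ => fun x => e (θ, x)) := by
  intro μ hμ c hc m ε hε
  haveI := hμ
  haveI : IsProbabilityMeasure (prodMeas μ m) := by
    unfold prodMeas; infer_instance
  have hemp : Measurable fun q : Θ × ((Fin m → X) × (Fin m → X)) =>
      ghostGap (fun x => e (q.1, x)) c m q.2 := by
    have key : ∀ g : (Θ × ((Fin m → X) × (Fin m → X))) → (Fin m → X), Measurable g →
        Measurable fun q => empErr (fun x => e (q.1, x)) c m (g q) := by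
      intro g hg
      have hrw : (fun q : Θ × ((Fin m → X) × (Fin m → X)) =>
          empErr (fun x => e (q.1, x)) c m (g q)) =
          fun q => (∑ i : Fin m, if e (q.1, g q i) = c (g q i) then (0 : ℝ) else 1) / m := by
        funext q
        unfold empErr
        congr 1
        rw [Finset.card_filter]
        push_cast
        refine Finset.sum_congr rfl fun i _ => ?_
        by_cases h : e (q.1, g q i) = c (g q i) <;> simp [h]
      rw [hrw]
      refine Measurable.div_const ?_ _
      refine Finset.measurable_sum _ fun i _ => ?_
      have h1 : Measurable fun q : Θ × ((Fin m → X) × (Fin m → X)) => e (q.1, g q i) :=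
        he.comp (measurable_fst.prodMk ((measurable_pi_apply i).comp hg))
      have h2 : Measurable fun q : Θ × ((Fin m → X) × (Fin m → X)) => c (g q i) :=
        hc.comp ((measurable_pi_apply i).comp hg)
      exact Measurable.ite (measurableSet_eq_fun h1 h2)
        measurable_const measurable_const
    exact (key _ (measurable_snd.comp measurable_snd)).sub
      (key _ (measurable_fst.comp measurable_snd))
  set M : Set (Θ × ((Fin m → X) × (Fin m → X))) :=
    {q | ghostGap (fun x => e (q.1, x)) c m q.2 ≥ ε / 2} with hM
  have hMmeas : MeasurableSet M := hemp measurableSet_Ici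
  have himg : badEvent (Set.range fun θ => fun x => e (θ, x)) c m ε = Prod.snd '' M := by
    ext p
    simp only [badEvent, Set.mem_setOf_eq, Set.mem_image, hM]
    constructor
    · rintro ⟨h, ⟨θ, rfl⟩, hgap⟩
      exact ⟨(θ, p), hgap, rfl⟩
    · rintro ⟨⟨θ, p'⟩, hgap, rfl⟩
      exact ⟨_, ⟨θ, rfl⟩, hgap⟩
  have hA : AnalyticSet (badEvent (Set.range fun θ => fun x => e (θ, x)) c m ε) := by
    rw [himg]
    exact hMmeas.analyticSet_image measurable_snd
  exact BorelParamAux.analyticSet_nullMeasurableSet hA (prodMeas μ m)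
end

section
/- If A ⊆ R is analytic but not Borel, then the concept class C_A consisting of the constant-zero function together with the indicator functions of singletons {a} for a in A has the following property: the one-sided ghost bad event for sample size m = 1, target c ≡ 0, and threshold epsilon = 1, namely {(x,y) in R × R : exists h in C_A, (1[h(y) ≠ 0] − 1[h(x) ≠ 0]) ≥ 1/2}, equals {(x,y) : y ∈ A and x ≠ y} and is therefore analytic but not Borel. -/
open MeasureTheory

/-- The class `C_A = {0} ∪ {𝟙_{a} : a ∈ A}`. -/
def singletonClass (A : Set ℝ) : Set (ℝ → Bool) :=
  {fun _ => false} ∪ {h | ∃ a ∈ A, h = fun x => decide (x = a)}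

/-- For analytic non-Borel `A`, the one-sided ghost bad event of `C_A` at
`m = 1`, target `c ≡ 0`, threshold `ε = 1`, equals `{(x,y) : y ∈ A ∧ x ≠ y}`
and is analytic but not Borel. -/
theorem singletonClass_badEvent_analytic_not_borel
    (A : Set ℝ) (hA : MeasureTheory.AnalyticSet A) (hnB : ¬ MeasurableSet A) :
    {p : ℝ × ℝ | ∃ h ∈ singletonClass A,
        (if h p.2 ≠ false then (1 : ℝ) else 0) -
          (if h p.1 ≠ false then (1 : ℝ) else 0) ≥ 1 / 2}
      = {p : ℝ × ℝ | p.2 ∈ A ∧ p.1 ≠ p.2} ∧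
    MeasureTheory.AnalyticSet
      {p : ℝ × ℝ | ∃ h ∈ singletonClass A,
        (if h p.2 ≠ false then (1 : ℝ) else 0) -
          (if h p.1 ≠ false then (1 : ℝ) else 0) ≥ 1 / 2} ∧
    ¬ MeasurableSet
      {p : ℝ × ℝ | ∃ h ∈ singletonClass A,
        (if h p.2 ≠ false then (1 : ℝ) else 0) -
          (if h p.1 ≠ false then (1 : ℝ) else 0) ≥ 1 / 2} := by
  have heq : {p : ℝ × ℝ | ∃ h ∈ singletonClass A,
        (if h p.2 ≠ false then (1 : ℝ) else 0) -
          (if h p.1 ≠ false then (1 : ℝ) else 0) ≥ 1 / 2}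
      = {p : ℝ × ℝ | p.2 ∈ A ∧ p.1 ≠ p.2} := by
    ext ⟨x, y⟩
    simp only [Set.mem_setOf_eq]
    constructor
    · rintro ⟨h, hmem, hge⟩
      rcases hmem with h0 | ⟨a, haA, rfl⟩
      · simp only [Set.mem_singleton_iff] at h0
        subst h0
        norm_num at hge
      · simp only [ne_eq, decide_eq_false_iff_not, not_not, decide_eq_true_eq] at hge
        by_cases hy : y = a
        · by_cases hx : x = a
          · simp [hx, hy] at hge; norm_num at hge
          · subst hy; exact ⟨haA, hx⟩
        · by_cases hx : x = a <;> simp [hx, hy] at hge <;> norm_num at hge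
    · rintro ⟨hyA, hxy⟩
      refine ⟨fun z => decide (z = y), Or.inr ⟨y, hyA, rfl⟩, ?_⟩
      simp [hxy]
      norm_num
  refine ⟨heq, ?_, ?_⟩
  · rw [heq]
    have h1 : AnalyticSet (Prod.snd ⁻¹' A : Set (ℝ × ℝ)) :=
      hA.preimage continuous_snd
    have h2 : AnalyticSet ({p : ℝ × ℝ | p.1 ≠ p.2}) := by
      apply MeasurableSet.analyticSet
      exact (measurableSet_eq_fun measurable_fst measurable_snd).compl
    have : {p : ℝ × ℝ | p.2 ∈ A ∧ p.1 ≠ p.2}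
        = ⋂ b : Bool, (if b then Prod.snd ⁻¹' A else {p : ℝ × ℝ | p.1 ≠ p.2}) := by
      ext p
      simp [Set.mem_iInter, Bool.forall_bool, and_comm]
    rw [this]
    exact AnalyticSet.iInter (fun b => by cases b <;> simpa)
  · rw [heq]
    intro hS
    apply hnB
    -- sections at x = 0 and x = 1
    have hs : ∀ x : ℝ, MeasurableSet {y : ℝ | y ∈ A ∧ x ≠ y} := by
      intro x
      have := hS.preimage (measurable_prodMk_left (m := by infer_instance) (x := x))
      simpa using this
    have : A = {y : ℝ | y ∈ A ∧ (0:ℝ) ≠ y} ∪ {y : ℝ | y ∈ A ∧ (1:ℝ) ≠ y} := by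
      ext y
      simp only [Set.mem_union, Set.mem_setOf_eq]
      constructor
      · intro hy
        rcases ne_or_eq (0:ℝ) y with h | h
        · exact Or.inl ⟨hy, h⟩
        · exact Or.inr ⟨hy, by rw [← h]; norm_num⟩
      · rintro (⟨hy, _⟩ | ⟨hy, _⟩) <;> exact hy
    rw [this]
    exact (hs 0).union (hs 1)
end

section
/- If A ⊆ R is analytic but not Borel, then the concept class C_A = {0} ∪ {indicator of {a} : a ∈ A} satisfies WB_meas (every one-sided ghost bad event with measurable target is null-measurable under every product probability measure) but fails the Borel ghost-gap condition KW: there exist a measurable target c, sample size m, and threshold such that the supremum ghost-gap map p ↦ sup_{h ∈ C_A} (L_T(h,c) − L_S(h,c)) is not Borel measurable. -/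
open MeasureTheory

/-- The one-sided supremum ghost-gap map of a class. -/
noncomputable def supGhostGap {X : Type*} (C : Set (X → Bool)) (c : X → Bool) (m : ℕ)
    (p : (Fin m → X) × (Fin m → X)) : ℝ :=
  sSup {g : ℝ | ∃ h ∈ C, g = ghostGap h c m p}


open Set Filter Topology
open scoped ENNReal

section Helpers

section Capacity

variable {α : Type*} [TopologicalSpace α] [PolishSpace α] [MeasurableSpace α] [BorelSpace α]

/-- Inner compact approximation for analytic sets (capacitability). -/
lemma analytic_inner_compact {A : Set α} (hA : AnalyticSet A) (μ : Measure α)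
    [IsFiniteMeasure μ] {ε : ℝ≥0∞} (hε : ε ≠ 0) :
    ∃ K : Set α, IsCompact K ∧ K ⊆ A ∧ μ A ≤ μ K + ε := by
  rw [AnalyticSet] at hA
  rcases hA with rfl | ⟨f, hf, hfr⟩
  · exact ⟨∅, isCompact_empty, Subset.rfl, by simp⟩
  set E : (ℕ → ℕ) → ℕ → Set (ℕ → ℕ) := fun s k => {x | ∀ i < k, x i ≤ s i} with hE
  have key : ∀ (s : ℕ → ℕ) (k : ℕ), μ A < μ (f '' E s k) + ε →
      ∃ n, μ A < μ (f '' E (Function.update s k n) (k + 1)) + ε := by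
    intro s k hk
    have hmono : Monotone (fun n => f '' (E s k ∩ {x | x k ≤ n})) := fun a b hab =>
      image_mono (inter_subset_inter Subset.rfl fun x hx => le_trans hx hab)
    have hun : ⋃ n, f '' (E s k ∩ {x | x k ≤ n}) = f '' E s k := by
      rw [← image_iUnion]
      have : ⋃ n, (E s k ∩ {x | x k ≤ n}) = E s k :=
        Subset.antisymm (iUnion_subset fun n => inter_subset_left) fun x hx =>
          mem_iUnion.2 ⟨x k, hx, show x k ≤ x k from le_rfl⟩
      rw [this]
    have hcont := hmono.measure_iUnion (μ := μ)
    rw [hun] at hcont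
    rw [hcont, ENNReal.iSup_add] at hk
    rcases lt_iSup_iff.1 hk with ⟨n, hn⟩
    refine ⟨n, lt_of_lt_of_le hn (add_le_add_left (measure_mono (image_mono ?_)) ε)⟩
    rintro x ⟨hx1, hx2⟩ i hi
    rcases Nat.lt_succ_iff_lt_or_eq.1 hi with hik | rfl
    · rw [Function.update_of_ne (by omega)]
      exact hx1 i hik
    · rw [Function.update_self]; exact hx2
  choose! g hg using key
  set T : ℕ → (ℕ → ℕ) :=
    fun k => Nat.rec (fun _ => 0) (fun k s => Function.update s k (g s k)) k with hT
  have hTsucc : ∀ k, T (k + 1) = Function.update (T k) k (g (T k) k) := fun k => rfl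
  have hinvT : ∀ k, μ A < μ (f '' E (T k) k) + ε := by
    intro k
    induction k with
    | zero =>
        have : E (T 0) 0 = univ := by ext x; simp [hE]
        rw [this, image_univ, hfr]
        exact ENNReal.lt_add_right (measure_ne_top μ A) hε
    | succ k ih =>
        rw [hTsucc]
        exact hg (T k) k ih
  set σ : ℕ → ℕ := fun k => T (k + 1) k with hσ
  have hagree : ∀ m i, i < m → T m i = σ i := by
    intro m
    induction m with
    | zero => intro i hi; omega
    | succ m ih =>
        intro i hi
        rcases Nat.lt_succ_iff_lt_or_eq.1 hi with him | rfl
        · rw [hTsucc, Function.update_of_ne (by omega)]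
          exact ih i him
        · rfl
  have hEσ : ∀ k, E (T k) k = E σ k := by
    intro k
    ext x
    simp only [hE, mem_setOf_eq]
    constructor
    · intro h i hi; rw [← hagree k i hi]; exact h i hi
    · intro h i hi; rw [hagree k i hi]; exact h i hi
  have hinv : ∀ k, μ A < μ (f '' E σ k) + ε := fun k => by
    rw [← hEσ]; exact hinvT k
  set C : Set (ℕ → ℕ) := {x | ∀ i, x i ≤ σ i} with hC
  have hCc : IsCompact C := by
    have : C = Set.pi univ fun i => Iic (σ i) := by
      ext x; simp [hC, Set.mem_pi, Pi.le_def]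
    rw [this]
    exact isCompact_univ_pi fun i => (Set.finite_Iic (σ i)).isCompact
  have hinter : (⋂ k, closure (f '' E σ k)) ⊆ f '' C := by
    letI := TopologicalSpace.upgradeIsCompletelyMetrizable α
    intro y hy
    have hy' : ∀ k : ℕ, ∃ x ∈ E σ k, dist y (f x) < 1 / (k + 1) := by
      intro k
      rcases Metric.mem_closure_iff.1 (mem_iInter.1 hy k) (1 / (k + 1)) (by positivity) with
        ⟨z, ⟨x, hx, rfl⟩, hdz⟩
      exact ⟨x, hx, hdz⟩
    choose x hx hdx using hy'
    set U : Ultrafilter ℕ := Ultrafilter.of atTop with hU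
    have hUle : (U : Filter ℕ) ≤ atTop := Ultrafilter.of_le _
    have hcoord : ∀ i, ∃ c, c ≤ σ i ∧ {k | x k i = c} ∈ U := by
      intro i
      have hmem : Iic (σ i) ∈ U.map fun k => x k i := by
        rw [Ultrafilter.mem_map]
        apply hUle
        filter_upwards [eventually_gt_atTop i] with k hk
        exact hx k i hk
      obtain ⟨c, hc, hcp⟩ := Ultrafilter.eq_pure_of_finite_mem (Set.finite_Iic (σ i)) hmem
      refine ⟨c, hc, ?_⟩
      have : {c} ∈ U.map fun k => x k i := by rw [hcp]; simp
      rw [Ultrafilter.mem_map] at this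
      exact this
    choose c hcle hcU using hcoord
    have hxc : Tendsto (fun k => x k) (U : Filter ℕ) (𝓝 c) := by
      rw [tendsto_pi_nhds]
      intro i
      have : (𝓝 (c i) : Filter ℕ) = pure (c i) := nhds_discrete ℕ ▸ rfl
      rw [this, tendsto_pure]
      exact hcU i
    have h1 : Tendsto (fun k => f (x k)) (U : Filter ℕ) (𝓝 (f c)) := (hf.tendsto c).comp hxc
    have h2 : Tendsto (fun k => f (x k)) atTop (𝓝 y) := by
      rw [tendsto_iff_dist_tendsto_zero]
      refine squeeze_zero (fun k => dist_nonneg) (fun k => ?_) tendsto_one_div_add_atTop_nhds_zero_nat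
      rw [dist_comm]
      exact (hdx k).le
    have hfc : f c = y := tendsto_nhds_unique h1 (h2.mono_left hUle)
    exact ⟨c, fun i => hcle i, hfc⟩
  have hanti : Antitone fun k => closure (f '' E σ k) := by
    intro a b hab
    refine closure_mono (image_mono fun x hx i hi => hx i (lt_of_lt_of_le hi hab))
  have hiInter : μ (⋂ k, closure (f '' E σ k)) = ⨅ k, μ (closure (f '' E σ k)) :=
    Directed.measure_iInter (fun k => isClosed_closure.measurableSet.nullMeasurableSet)
      hanti.directed_ge ⟨0, measure_ne_top μ _⟩
  refine ⟨f '' C, hCc.image hf, by rw [← hfr]; exact image_subset_range f C, ?_⟩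
  calc μ A ≤ (⨅ k, μ (closure (f '' E σ k))) + ε := by
        rw [ENNReal.iInf_add]
        exact le_iInf fun k =>
          le_trans (hinv k).le (add_le_add_left (measure_mono subset_closure) ε)
    _ = μ (⋂ k, closure (f '' E σ k)) + ε := by rw [hiInter]
    _ ≤ μ (f '' C) + ε := add_le_add_left (measure_mono hinter) ε

end Capacity

/-- **Analytic sets are universally measurable** (null-measurable w.r.t. every
finite Borel measure). -/
theorem analytic_null {α : Type*} [TopologicalSpace α] [PolishSpace α]
    [MeasurableSpace α] [BorelSpace α] {A : Set α} (hA : AnalyticSet A) (μ : Measure α)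
    [IsFiniteMeasure μ] : NullMeasurableSet A μ := by
  have h : ∀ n : ℕ, ∃ K : Set α, IsCompact K ∧ K ⊆ A ∧ μ A ≤ μ K + ((n : ℝ≥0∞) + 1)⁻¹ :=
    fun n => analytic_inner_compact hA μ (by simp)
  choose K hKc hKA hKμ using h
  set B := ⋃ n, K n with hB
  have hBm : MeasurableSet B := MeasurableSet.iUnion fun n => (hKc n).measurableSet
  have hBA : B ⊆ A := iUnion_subset hKA
  have hμAB : μ A ≤ μ B := by
    refine ENNReal.le_of_forall_pos_le_add fun δ hδ _ => ?_
    obtain ⟨n, hn⟩ := ENNReal.exists_inv_nat_lt (a := (δ : ℝ≥0∞)) (by simpa using hδ.ne')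
    calc μ A ≤ μ (K n) + ((n : ℝ≥0∞) + 1)⁻¹ := hKμ n
      _ ≤ μ B + (δ : ℝ≥0∞) := by
          refine add_le_add (measure_mono (subset_iUnion K n)) ?_
          refine le_trans (le_trans ?_ hn.le) le_rfl
          exact ENNReal.inv_le_inv.2 (by simp)
  have hnull : μ (toMeasurable μ A \ B) = 0 := by
    rw [measure_diff (hBA.trans (subset_toMeasurable μ A)) hBm.nullMeasurableSet
      (measure_ne_top μ B), measure_toMeasurable]
    exact tsub_eq_zero_of_le hμAB
  have hAeq : A = B ∪ (A \ B) := by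
    rw [union_diff_cancel' (fun x hx => hx) hBA]
  rw [hAeq]
  exact hBm.nullMeasurableSet.union
    (NullMeasurableSet.of_null (measure_mono_null
      (diff_subset_diff_left (subset_toMeasurable μ A)) hnull))

lemma empErr_one (h : ℝ → Bool) (S : Fin 1 → ℝ) :
    empErr h (fun _ => false) 1 S = if h (S 0) then 1 else 0 := by
  rw [empErr]
  rw [show (Finset.univ : Finset (Fin 1)) = {0} from rfl]
  rw [Finset.filter_singleton]
  by_cases hb : h (S 0)
  · simp [hb]
  · simp [hb]

lemma empErr_one_mem (h : ℝ → Bool) (S : Fin 1 → ℝ) :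
    empErr h (fun _ => false) 1 S = 0 ∨ empErr h (fun _ => false) 1 S = 1 := by
  rw [empErr_one]; by_cases hb : h (S 0) <;> simp [hb]

lemma gap_le_one (h : ℝ → Bool) (p : (Fin 1 → ℝ) × (Fin 1 → ℝ)) :
    ghostGap h (fun _ => false) 1 p ≤ 1 := by
  rw [ghostGap]
  rcases empErr_one_mem h p.2 with h2 | h2 <;> rcases empErr_one_mem h p.1 with h1 | h1 <;>
    rw [h1, h2] <;> norm_num

lemma gap_zero (p : (Fin 1 → ℝ) × (Fin 1 → ℝ)) :
    ghostGap (fun _ => false) (fun _ => false) 1 p = 0 := by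
  rw [ghostGap, empErr_one, empErr_one]; simp

open scoped Classical in
/-- Explicit value of the sup ghost gap for `m = 1`, target `false`. -/
lemma supGhostGap_eq (A : Set ℝ) (p : (Fin 1 → ℝ) × (Fin 1 → ℝ)) :
    supGhostGap (singletonClass A) (fun _ => false) 1 p =
      if p.2 0 ∈ A ∧ p.1 0 ≠ p.2 0 then 1 else 0 := by
  have h0mem : (0 : ℝ) ∈ {g : ℝ | ∃ h ∈ singletonClass A, g = ghostGap h (fun _ => false) 1 p} :=
    ⟨fun _ => false, Or.inl rfl, (gap_zero p).symm⟩
  split_ifs with hE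
  · apply IsGreatest.csSup_eq
    constructor
    · refine ⟨fun x => decide (x = p.2 0), Or.inr ⟨p.2 0, hE.1, rfl⟩, ?_⟩
      rw [ghostGap, empErr_one, empErr_one]
      simp [hE.2]
    · rintro g ⟨h, _, rfl⟩
      exact gap_le_one h p
  · apply IsGreatest.csSup_eq
    refine ⟨h0mem, ?_⟩
    rintro g ⟨h, hmem | ⟨a, ha, rfl⟩, rfl⟩
    · rw [mem_singleton_iff] at hmem
      rw [hmem, gap_zero]
    · rw [ghostGap, empErr_one, empErr_one]
      push_neg at hE
      by_cases h2 : p.2 0 = a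
      · have h1 : p.1 0 = a := by
          rw [← h2]; exact (hE (h2 ▸ ha)).symm ▸ rfl
        simp [h1, h2]
      · simp only [h2, decide_eq_true_eq, if_false]
        split_ifs <;> norm_num

theorem not_measurable_supGhostGap (A : Set ℝ) (hnB : ¬ MeasurableSet A) :
    ¬ Measurable (supGhostGap (singletonClass A) (fun _ => false) 1) := by
  intro hG
  set E : Set ((Fin 1 → ℝ) × (Fin 1 → ℝ)) := {p | p.2 0 ∈ A ∧ p.1 0 ≠ p.2 0} with hEdef
  have hEmeas : MeasurableSet E := by
    have hEq : E = supGhostGap (singletonClass A) (fun _ => false) 1 ⁻¹' {1} := by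
      ext p
      classical
      simp only [mem_preimage, mem_singleton_iff]
      rw [supGhostGap_eq A p]
      constructor
      · intro hp
        simp only [hEdef, mem_setOf_eq] at hp
        rw [if_pos hp]
      · intro hp
        by_contra hc
        simp only [hEdef, mem_setOf_eq] at hc
        rw [if_neg hc] at hp
        norm_num at hp
    rw [hEq]
    exact hG (measurableSet_singleton 1)
  have sec : ∀ b : ℝ, MeasurableSet (A \ {b}) := by
    intro b
    have hφ : Measurable fun x : ℝ =>
        ((fun _ => b, fun _ => x) : (Fin 1 → ℝ) × (Fin 1 → ℝ)) :=
      Measurable.prod measurable_const (measurable_pi_lambda _ fun _ => measurable_id)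
    have hpre := hφ hEmeas
    have : (fun x : ℝ => ((fun _ => b, fun _ => x) : (Fin 1 → ℝ) × (Fin 1 → ℝ))) ⁻¹' E
        = A \ {b} := by
      ext x
      simp only [mem_preimage, hEdef, mem_setOf_eq, mem_diff, mem_singleton_iff]
      exact ⟨fun ⟨h1, h2⟩ => ⟨h1, fun hxb => h2 (hxb ▸ rfl)⟩,
        fun ⟨h1, h2⟩ => ⟨h1, fun hbx => h2 (by rw [← hbx])⟩⟩
    rwa [this] at hpre
  have : MeasurableSet A := by
    have hu := (sec 0).union (sec 1)
    have : A \ {0} ∪ A \ {1} = A := by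
      ext x
      simp only [mem_union, mem_diff, mem_singleton_iff]
      constructor
      · rintro (⟨h, _⟩ | ⟨h, _⟩) <;> exact h
      · intro hx
        by_cases h0 : x = 0
        · exact Or.inr ⟨hx, by rw [h0]; norm_num⟩
        · exact Or.inl ⟨hx, h0⟩
    rwa [this] at hu
  exact hnB this

lemma empErr_eq_sum {X : Type*} (h c : X → Bool) (m : ℕ) (S : Fin m → X) :
    empErr h c m S = (∑ i : Fin m, if h (S i) ≠ c (S i) then (1 : ℝ) else 0) / m := by
  rw [empErr, Finset.card_filter]
  congr 1
  push_cast
  rfl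

/-- Binary intersection of analytic sets. -/
lemma analyticSet_inter {α : Type*} [TopologicalSpace α] [T2Space α] {s t : Set α}
    (hs : AnalyticSet s) (ht : AnalyticSet t) : AnalyticSet (s ∩ t) := by
  have : s ∩ t = ⋂ b : Bool, (bif b then s else t) := by
    ext x; simp [Bool.forall_bool, and_comm]
  rw [this]
  exact AnalyticSet.iInter fun b => by cases b <;> simpa

section WB

variable {m : ℕ} (c : ℝ → Bool) (hc : Measurable c)

/-- Joint measurability of the parametrized empirical error. -/
lemma measurable_empErr_param {β : Type*} [MeasurableSpace β] {u : β → ℝ}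
    {v : β → (Fin m → ℝ)} (hu : Measurable u) (hv : Measurable v) (hc : Measurable c) :
    Measurable fun b : β => empErr (fun x => decide (x = u b)) c m (v b) := by
  simp only [empErr_eq_sum]
  apply Measurable.div_const
  apply Finset.measurable_sum
  intro i _
  have hvi : Measurable fun b : β => v b i := (measurable_pi_apply i).comp hv
  have hset : MeasurableSet {b : β | decide (v b i = u b) ≠ c (v b i)} := by
    have hEq : {b : β | decide (v b i = u b) ≠ c (v b i)} =
        ({b : β | v b i = u b} ∩ {b | c (v b i) = false}) ∪
        ({b : β | v b i = u b}ᶜ ∩ {b | c (v b i) = true}) := by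
      ext b
      simp only [mem_setOf_eq, mem_union, mem_inter_iff, mem_compl_iff]
      by_cases hq : v b i = u b <;> cases hcv : c (v b i) <;> simp [hq, hcv]
    rw [hEq]
    have hd : MeasurableSet {b : β | v b i = u b} :=
      measurableSet_eq_fun hvi hu
    exact ((hd.inter ((hc.comp hvi) (measurableSet_singleton false))).union
      (hd.compl.inter ((hc.comp hvi) (measurableSet_singleton true))))
  exact Measurable.ite hset measurable_const measurable_const

lemma measurable_empErr_const (h : ℝ → Bool) (hh : Measurable h) (hc : Measurable c) :
    Measurable fun S : Fin m → ℝ => empErr h c m S := by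
  simp only [empErr_eq_sum]
  apply Measurable.div_const
  apply Finset.measurable_sum
  intro i _
  have hu : Measurable fun S : Fin m → ℝ => S i := measurable_pi_apply i
  have hset : MeasurableSet {S : Fin m → ℝ | h (S i) ≠ c (S i)} := by
    have hEq : {S : Fin m → ℝ | h (S i) ≠ c (S i)} = (fun S : Fin m → ℝ => S i) ⁻¹' {x | h x ≠ c x} := rfl
    rw [hEq]
    apply hu
    have : {x : ℝ | h x ≠ c x} = (h ⁻¹' {true} ∩ c ⁻¹' {false}) ∪ (h ⁻¹' {false} ∩ c ⁻¹' {true}) := by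
      ext x
      simp only [mem_setOf_eq, mem_union, mem_inter_iff, mem_preimage, mem_singleton_iff]
      cases hx : h x <;> cases hcx : c x <;> simp
    rw [this]
    exact ((hh (measurableSet_singleton true)).inter (hc (measurableSet_singleton false))).union
      ((hh (measurableSet_singleton false)).inter (hc (measurableSet_singleton true)))
  exact Measurable.ite hset measurable_const measurable_const

lemma badEvent_eq (A : Set ℝ) (ε : ℝ) :
    badEvent (singletonClass A) c m ε =
      {p : (Fin m → ℝ) × (Fin m → ℝ) | ghostGap (fun _ => false) c m p ≥ ε / 2} ∪
      Prod.snd '' ((Prod.fst ⁻¹' A) ∩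
        {q : ℝ × ((Fin m → ℝ) × (Fin m → ℝ)) |
          ghostGap (fun x => decide (x = q.1)) c m q.2 ≥ ε / 2}) := by
  ext p
  simp only [badEvent, singletonClass, mem_union, mem_setOf_eq, mem_singleton_iff, mem_image,
    mem_inter_iff, mem_preimage]
  constructor
  · rintro ⟨h, hmem | ⟨a, ha, rfl⟩, hgap⟩
    · left; rwa [hmem] at hgap
    · right; exact ⟨(a, p), ⟨ha, hgap⟩, rfl⟩
  · rintro (h0 | ⟨⟨a, p'⟩, ⟨ha, hgap⟩, rfl⟩)
    · exact ⟨_, Or.inl rfl, h0⟩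
    · exact ⟨_, Or.inr ⟨a, ha, rfl⟩, hgap⟩

set_option maxHeartbeats 1000000 in
theorem singletonClass_WBmeas (A : Set ℝ) (hA : AnalyticSet A) :
    WBmeas (singletonClass A) := by
  intro μ hμ c hc m ε hε
  haveI := hμ
  haveI : IsProbabilityMeasure (prodMeas μ m) := by
    unfold prodMeas; infer_instance
  rw [badEvent_eq]
  apply NullMeasurableSet.union
  · -- Borel part
    refine (MeasurableSet.nullMeasurableSet ?_)
    have hgap : Measurable fun p : (Fin m → ℝ) × (Fin m → ℝ) =>
        ghostGap (fun _ => false) c m p := by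
      unfold ghostGap
      exact ((measurable_empErr_const c (fun _ => false) measurable_const hc).comp
        measurable_snd).sub
        ((measurable_empErr_const c (fun _ => false) measurable_const hc).comp measurable_fst)
    exact hgap measurableSet_Ici
  · -- analytic part
    have hG : MeasurableSet {q : ℝ × ((Fin m → ℝ) × (Fin m → ℝ)) |
        ghostGap (fun x => decide (x = q.1)) c m q.2 ≥ ε / 2} := by
      have hgap : Measurable fun q : ℝ × ((Fin m → ℝ) × (Fin m → ℝ)) =>
          ghostGap (fun x => decide (x = q.1)) c m q.2 := by
        unfold ghostGap
        exact (measurable_empErr_param c measurable_fst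
            (measurable_snd.comp measurable_snd) hc).sub
          (measurable_empErr_param c measurable_fst
            (measurable_fst.comp measurable_snd) hc)
      exact hgap measurableSet_Ici
    have hAn : AnalyticSet (Prod.snd '' ((Prod.fst ⁻¹' A) ∩
        {q : ℝ × ((Fin m → ℝ) × (Fin m → ℝ)) |
          ghostGap (fun x => decide (x = q.1)) c m q.2 ≥ ε / 2})) := by
      apply AnalyticSet.image_of_continuous _ continuous_snd
      exact analyticSet_inter (hA.preimage continuous_fst) hG.analyticSet
    exact analytic_null hAn (prodMeas μ m)

end WB

end Helpers

/-- Strict separation: for analytic non-Borel `A ⊆ ℝ`, the class `C_A` satisfies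
`WBmeas` but fails the Borel ghost-gap condition: some supremum ghost-gap map with
measurable target is not Borel measurable. -/
theorem singletonClass_WBmeas_not_KW
    (A : Set ℝ) (hA : MeasureTheory.AnalyticSet A) (hnB : ¬ MeasurableSet A) :
    WBmeas (singletonClass A) ∧
    ∃ c : ℝ → Bool, Measurable c ∧ ∃ m : ℕ,
      ¬ Measurable (supGhostGap (singletonClass A) c m) := by
  exact ⟨singletonClass_WBmeas A hA, fun _ => false, measurable_const, 1,
    not_measurable_supGhostGap A hnB⟩
end

section
/- The class C_A = {0} ∪ {indicator of {a} : a ∈ A} for an analytic set A ⊆ R is Borel-parameterized: there exist a standard Borel space Theta' and a jointly measurable evaluator e' : Theta' × R → Bool whose range of sections equals C_A. Concretely, if g : Theta → R is a measurable map from a standard Borel space with range A, one may take Theta' = Bool × Theta and e'((b,theta), x) = (b = true ∧ x = g(theta)). -/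
open MeasureTheory

/-- `C_A` is Borel-parameterized: given a measurable `g : Θ → ℝ` from a standard
Borel space with range `A`, the evaluator `e'((b, θ), x) = (b = true ∧ x = g θ)`
on `Θ' = Bool × Θ` is jointly measurable and its sections range over `C_A`. -/
theorem singletonClass_borel_parameterized
    (A : Set ℝ)
    (Θ : Type) [MeasurableSpace Θ] [StandardBorelSpace Θ]
    (g : Θ → ℝ) (hg : Measurable g) (hgA : Set.range g = A) :
    ∃ (Θ' : Type) (_ : MeasurableSpace Θ') (_ : StandardBorelSpace Θ')
      (e' : Θ' × ℝ → Bool), Measurable e' ∧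
        (Set.range fun θ' => fun x => e' (θ', x)) = singletonClass A := by
  rcases isEmpty_or_nonempty Θ with hΘ | hΘ
  · -- Θ empty: A = ∅, take Θ' = Unit, e' ≡ false
    have hA : A = ∅ := by rw [← hgA, Set.range_eq_empty]
    refine ⟨Unit, inferInstance, inferInstance, fun _ => false, measurable_const, ?_⟩
    ext h
    simp [singletonClass, hA, eq_comm]
  refine ⟨Bool × Θ, inferInstance, inferInstance,
    fun p => p.1.1 && decide (p.2 = g p.1.2), ?_, ?_⟩
  · -- measurability
    have hset : MeasurableSet {p : (Bool × Θ) × ℝ | p.2 = g p.1.2} :=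
      measurableSet_eq_fun measurable_snd (hg.comp (measurable_snd.comp measurable_fst))
    have hb : MeasurableSet {p : (Bool × Θ) × ℝ | p.1.1 = true} :=
      (measurable_fst.comp measurable_fst) (measurableSet_singleton true)
    apply measurable_to_countable'
    intro y
    cases y with
    | true =>
      have : (fun p : (Bool × Θ) × ℝ => p.1.1 && decide (p.2 = g p.1.2)) ⁻¹' {true}
          = {p | p.1.1 = true} ∩ {p | p.2 = g p.1.2} := by
        ext p
        simp [Bool.and_eq_true]
      rw [this]
      exact hb.inter hset
    | false =>
      have : (fun p : (Bool × Θ) × ℝ => p.1.1 && decide (p.2 = g p.1.2)) ⁻¹' {false}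
          = ({p | p.1.1 = true} ∩ {p | p.2 = g p.1.2})ᶜ := by
        ext p
        cases hp : p.1.1 <;> simp [hp]
      rw [this]
      exact (hb.inter hset).compl
  · -- range equality
    ext h
    simp only [Set.mem_range, singletonClass, Set.mem_union, Set.mem_singleton_iff,
      Set.mem_setOf_eq]
    constructor
    · rintro ⟨⟨b, θ⟩, rfl⟩
      cases b with
      | false => left; funext x; simp
      | true =>
        right
        exact ⟨g θ, hgA ▸ Set.mem_range_self θ, by funext x; simp⟩
    · rintro (rfl | ⟨a, ha, rfl⟩)
      · obtain ⟨θ⟩ := hΘ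
        exact ⟨⟨false, θ⟩, by funext x; simp⟩
      · obtain ⟨θ, rfl⟩ : a ∈ Set.range g := hgA ▸ ha
        exact ⟨⟨true, θ⟩, by funext x; simp⟩
end

section
/- Let X be a Polish space with Borel sigma-algebra, Theta1, Theta2, S standard Borel spaces, pi1 : Theta1 → S and pi2 : Theta2 → S measurable, and m : (Theta1 × Theta2) × X → Bool jointly measurable. Then the fiber-product amalgamation class Amal(pi1, pi2, m) = {x ↦ m((t1,t2), x) : pi1(t1) = pi2(t2)} satisfies WB_meas: every one-sided ghost bad event with measurable target is null-measurable under every product probability measure. -/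
open MeasureTheory

open Filter Topology Set
open scoped ENNReal NNReal

namespace AmalgAux

/-- One refinement step: restricting the `k`-th coordinate to `≤ j` loses at most `δ`
in outer measure, for `j` large enough. -/
lemma step_exists {Y : Type*} [MeasurableSpace Y] (ν : Measure Y) [IsFiniteMeasure ν]
    (f : (ℕ → ℕ) → Y) (B : Set (ℕ → ℕ)) (k : ℕ) {δ : ℝ≥0∞} (hδ : 0 < δ) :
    ∃ j : ℕ, ν (f '' B) ≤ ν (f '' (B ∩ {x | x k ≤ j})) + δ := by
  have hmono : Monotone (fun j : ℕ => f '' (B ∩ {x | x k ≤ j})) := by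
    intro a b hab
    exact Set.image_mono (Set.inter_subset_inter_right _ (fun x hx => le_trans hx hab))
  have hU : (⋃ j : ℕ, f '' (B ∩ {x | x k ≤ j})) = f '' B := by
    rw [← Set.image_iUnion, ← Set.inter_iUnion]
    have : (⋃ j : ℕ, {x : ℕ → ℕ | x k ≤ j}) = Set.univ :=
      Set.eq_univ_of_forall fun x => Set.mem_iUnion.mpr ⟨x k, by simp⟩
    rw [this, Set.inter_univ]
  have hsup : ν (f '' B) = ⨆ j, ν (f '' (B ∩ {x | x k ≤ j})) := by
    rw [← hU]; exact hmono.measure_iUnion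
  rcases eq_or_ne (ν (f '' B)) 0 with h0 | h0
  · exact ⟨0, by simp [h0]⟩
  have hlt : ν (f '' B) - δ < ⨆ j, ν (f '' (B ∩ {x | x k ≤ j})) := by
    calc ν (f '' B) - δ < ν (f '' B) :=
          ENNReal.sub_lt_self (measure_ne_top ν _) h0 hδ.ne'
      _ = _ := hsup
  obtain ⟨j, hj⟩ := lt_iSup_iff.mp hlt
  refine ⟨j, ?_⟩
  calc ν (f '' B) ≤ ν (f '' B) - δ + δ := le_tsub_add
    _ ≤ ν (f '' (B ∩ {x | x k ≤ j})) + δ := add_le_add hj.le le_rfl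

/-- The decreasing sequence of basic restrictions chosen by `pick`. -/
def capB (pick : Set (ℕ → ℕ) → ℕ → ℕ) : ℕ → Set (ℕ → ℕ)
  | 0 => Set.univ
  | k + 1 => capB pick k ∩ {x | x k ≤ pick (capB pick k) k}

lemma mem_capB (pick : Set (ℕ → ℕ) → ℕ → ℕ) :
    ∀ k x, x ∈ capB pick k ↔ ∀ i < k, x i ≤ pick (capB pick i) i := by
  intro k
  induction k with
  | zero => simp [capB]
  | succ k ih =>
    intro x
    simp only [capB, Set.mem_inter_iff, Set.mem_setOf_eq, ih, Nat.lt_succ_iff_lt_or_eq]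
    constructor
    · rintro ⟨h1, h2⟩ i (hi | rfl)
      · exact h1 i hi
      · exact h2
    · intro h
      exact ⟨fun i hi => h i (Or.inl hi), h k (Or.inr rfl)⟩

lemma capB_antitone (pick : Set (ℕ → ℕ) → ℕ → ℕ) : Antitone (capB pick) := by
  refine antitone_nat_of_succ_le fun k => ?_
  exact Set.inter_subset_left

/-- Compact inner approximation of the range of a continuous map from Baire space. -/
lemma exists_compact_inner {Y : Type*} [TopologicalSpace Y]
    [TopologicalSpace.MetrizableSpace Y] [MeasurableSpace Y] [OpensMeasurableSpace Y]
    (ν : Measure Y) [IsFiniteMeasure ν] {f : (ℕ → ℕ) → Y} (hf : Continuous f)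
    {ε : ℝ≥0∞} (hε : 0 < ε) :
    ∃ K : Set Y, IsCompact K ∧ K ⊆ Set.range f ∧ ν (Set.range f) ≤ ν K + ε := by
  letI := TopologicalSpace.metrizableSpaceMetric Y
  -- the error budget
  set δ : ℕ → ℝ≥0∞ := fun k => ε * 2⁻¹ ^ (k + 1) with hδdef
  have hδpos : ∀ k, 0 < δ k := by
    intro k
    exact ENNReal.mul_pos hε.ne' (pow_ne_zero _ (ENNReal.inv_ne_zero.mpr ENNReal.ofNat_ne_top))
  have hδsum : ∀ k, (∑ i ∈ Finset.range k, δ i) ≤ ε := by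
    intro k
    calc (∑ i ∈ Finset.range k, δ i) ≤ ∑' i, δ i := ENNReal.sum_le_tsum _
      _ = ε * ∑' i : ℕ, 2⁻¹ ^ (i + 1) := by rw [ENNReal.tsum_mul_left]
      _ = ε * (2⁻¹ * ∑' i : ℕ, (2⁻¹ : ℝ≥0∞) ^ i) := by
          congr 1
          rw [← ENNReal.tsum_mul_left]
          congr 1 with i
          ring
      _ = ε * (2⁻¹ * 2) := by
          rw [ENNReal.tsum_geometric]
          congr 2
          rw [show (1 : ℝ≥0∞) - 2⁻¹ = 2⁻¹ by
            rw [ENNReal.sub_eq_of_eq_add (by simp)]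
            rw [ENNReal.inv_two_add_inv_two]]
          simp
      _ = ε := by
          rw [ENNReal.inv_mul_cancel (by simp) (by simp), mul_one]
  -- the choice function
  have hpick : ∀ (B : Set (ℕ → ℕ)) (k : ℕ),
      ∃ j : ℕ, ν (f '' B) ≤ ν (f '' (B ∩ {x | x k ≤ j})) + δ k :=
    fun B k => step_exists ν f B k (hδpos k)
  set pick : Set (ℕ → ℕ) → ℕ → ℕ := fun B k => (hpick B k).choose with hpickdef
  have hpick' : ∀ (B : Set (ℕ → ℕ)) (k : ℕ),
      ν (f '' B) ≤ ν (f '' (B ∩ {x | x k ≤ pick B k})) + δ k :=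
    fun B k => (hpick B k).choose_spec
  set g : ℕ → ℕ := fun k => pick (capB pick k) k with hgdef
  -- invariant
  have hinv : ∀ k, ν (f '' Set.univ) ≤ ν (f '' capB pick k) + ∑ i ∈ Finset.range k, δ i := by
    intro k
    induction k with
    | zero => simp [capB]
    | succ k ih =>
      calc ν (f '' Set.univ) ≤ ν (f '' capB pick k) + ∑ i ∈ Finset.range k, δ i := ih
        _ ≤ (ν (f '' capB pick (k + 1)) + δ k) + ∑ i ∈ Finset.range k, δ i := by
            exact add_le_add (hpick' (capB pick k) k) le_rfl
        _ = ν (f '' capB pick (k + 1)) + ∑ i ∈ Finset.range (k + 1), δ i := by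
            rw [Finset.sum_range_succ]; ring
  -- the compact cube and candidate compact set
  set K₀ : Set (ℕ → ℕ) := {x | ∀ i, x i ≤ g i} with hK₀def
  have hK₀cpt : IsCompact K₀ := by
    have : K₀ = Set.pi Set.univ fun i => Set.Iic (g i) := by
      ext x; simp [hK₀def, Set.mem_pi, Pi.le_def]
    rw [this]
    exact isCompact_univ_pi fun i => (Set.finite_Iic (g i)).isCompact
  have hK₀sub : ∀ k, K₀ ⊆ capB pick k := by
    intro k x hx
    rw [mem_capB]
    intro i _
    exact hx i
  -- closures
  set C : ℕ → Set Y := fun k => closure (f '' capB pick k) with hCdef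
  have hCclosed : ∀ k, IsClosed (C k) := fun k => isClosed_closure
  have hCanti : Antitone C := fun a b hab =>
    closure_mono (Set.image_mono (capB_antitone pick hab))
  -- the key topological fact
  have hsubset : (⋂ k, C k) ⊆ f '' K₀ := by
    intro y hy
    simp only [Set.mem_iInter] at hy
    -- choose approximating points
    have hxk : ∀ k : ℕ, ∃ x ∈ capB pick k, dist y (f x) < 1 / (k + 1) := by
      intro k
      have h1 : (0 : ℝ) < 1 / (k + 1) := by positivity
      obtain ⟨b, hb, hd⟩ := Metric.mem_closure_iff.mp (hy k) _ h1
      obtain ⟨x, hx, rfl⟩ := hb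
      exact ⟨x, hx, hd⟩
    choose x hxmem hxdist using hxk
    -- truncations live in K₀
    set z : ℕ → (ℕ → ℕ) := fun k i => min (x k i) (g i) with hzdef
    have hzK₀ : ∀ k, z k ∈ K₀ := fun k i => min_le_right _ _
    have hzx : ∀ k i, i < k → z k i = x k i := by
      intro k i hik
      have := (mem_capB pick k (x k)).mp (hxmem k) i hik
      exact min_eq_left this
    obtain ⟨a, haK₀, φ, hφ, hza⟩ := hK₀cpt.tendsto_subseq hzK₀
    -- x ∘ φ also tends to a
    have hxa : Tendsto (fun l => x (φ l)) atTop (nhds a) := by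
      rw [tendsto_pi_nhds]
      intro i
      have hz_i : Tendsto (fun l => z (φ l) i) atTop (nhds (a i)) :=
        (continuous_apply i).continuousAt.tendsto.comp hza
      refine hz_i.congr' ?_
      filter_upwards [eventually_ge_atTop (i + 1)] with l hl
      have hiφ : i < φ l := lt_of_lt_of_le (Nat.lt_succ_self i) (hl.trans hφ.le_apply)
      exact hzx (φ l) i hiφ
    -- f (x k) → y
    have hfy : Tendsto (fun k => f (x k)) atTop (nhds y) := by
      rw [tendsto_iff_dist_tendsto_zero]
      refine squeeze_zero (g := fun k : ℕ => 1 / (k + 1 : ℝ)) (fun k => dist_nonneg)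
        (fun k => ?_) tendsto_one_div_add_atTop_nhds_zero_nat
      rw [dist_comm]
      exact (hxdist k).le
    have hfy' : Tendsto (fun l => f (x (φ l))) atTop (nhds y) :=
      hfy.comp hφ.tendsto_atTop
    have hfa : Tendsto (fun l => f (x (φ l))) atTop (nhds (f a)) :=
      ((hf.tendsto a).comp hxa)
    exact ⟨a, haK₀, tendsto_nhds_unique hfa hfy'⟩
  -- put everything together
  refine ⟨f '' K₀, hK₀cpt.image hf, Set.image_subset_range f K₀, ?_⟩
  have hfin : ν (⋂ k, C k) = ⨅ k, ν (C k) :=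
    hCanti.measure_iInter (fun k => ((hCclosed k).measurableSet).nullMeasurableSet)
      ⟨0, measure_ne_top ν _⟩
  have hbound : ∀ k, ν (Set.range f) ≤ ν (C k) + ε := by
    intro k
    calc ν (Set.range f) = ν (f '' Set.univ) := by rw [Set.image_univ]
      _ ≤ ν (f '' capB pick k) + ∑ i ∈ Finset.range k, δ i := hinv k
      _ ≤ ν (C k) + ε := add_le_add (measure_mono subset_closure) (hδsum k)
  have h1 : ν (Set.range f) - ε ≤ ⨅ k, ν (C k) :=
    le_iInf fun k => tsub_le_iff_right.mpr (hbound k)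
  calc ν (Set.range f) ≤ ν (Set.range f) - ε + ε := le_tsub_add
    _ ≤ (⨅ k, ν (C k)) + ε := add_le_add h1 le_rfl
    _ = ν (⋂ k, C k) + ε := by rw [hfin]
    _ ≤ ν (f '' K₀) + ε := add_le_add (measure_mono hsubset) le_rfl

/-- Analytic sets in a metrizable space are null-measurable for any finite Borel measure. -/
theorem analyticSet_nullMeasurableSet {Y : Type*} [TopologicalSpace Y]
    [TopologicalSpace.MetrizableSpace Y] [MeasurableSpace Y] [OpensMeasurableSpace Y]
    {A : Set Y} (hA : MeasureTheory.AnalyticSet A) (ν : Measure Y) [IsFiniteMeasure ν] :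
    NullMeasurableSet A ν := by
  letI := TopologicalSpace.metrizableSpaceMetric Y
  rw [MeasureTheory.AnalyticSet] at hA
  rcases hA with rfl | ⟨f, hf, rfl⟩
  · exact MeasurableSet.empty.nullMeasurableSet
  · -- inner compact approximations
    have h : ∀ n : ℕ, ∃ K : Set Y, IsCompact K ∧ K ⊆ Set.range f ∧
        ν (Set.range f) ≤ ν K + 1 / (n + 1) := by
      intro n
      exact exists_compact_inner ν hf
        (ENNReal.div_pos one_ne_zero
          (ENNReal.add_ne_top.mpr ⟨ENNReal.natCast_ne_top n, ENNReal.one_ne_top⟩))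
    choose K hKc hKsub hKle using h
    set t : Set Y := ⋃ n, K n with htdef
    have htm : MeasurableSet t :=
      MeasurableSet.iUnion fun n => (hKc n).isClosed.measurableSet
    have hts : t ⊆ Set.range f := Set.iUnion_subset hKsub
    have hνt : ν (Set.range f) ≤ ν t := by
      refine ENNReal.le_of_forall_pos_le_add fun r hr hfin => ?_
      obtain ⟨n, hn⟩ := ENNReal.exists_inv_nat_lt (ENNReal.coe_ne_zero.mpr hr.ne')
      have h1n : (1 / ((n : ℝ≥0∞) + 1)) ≤ (r : ℝ≥0∞) := by
        rw [one_div]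
        refine le_trans (ENNReal.inv_le_inv.mpr ?_) hn.le
        exact le_self_add
      calc ν (Set.range f) ≤ ν (K n) + 1 / (n + 1) := hKle n
        _ ≤ ν t + r := add_le_add (measure_mono (Set.subset_iUnion K n)) h1n
    -- conclude null measurability
    have hae : Set.range f =ᵐ[ν] t := by
      rw [MeasureTheory.ae_eq_set]
      constructor
      · have hsub : Set.range f \ t ⊆ toMeasurable ν (Set.range f) \ t :=
          Set.diff_subset_diff_left (subset_toMeasurable ν _)
        refine measure_mono_null hsub ?_
        rw [measure_diff (hts.trans (subset_toMeasurable ν _)) htm.nullMeasurableSet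
          (measure_ne_top ν t), measure_toMeasurable]
        exact tsub_eq_zero_of_le hνt
      · simp [Set.diff_eq_empty.mpr hts]
    exact (htm.nullMeasurableSet).congr hae.symm



lemma empErr_eq {X : Type*} (h c : X → Bool) (m : ℕ) (S : Fin m → X) :
    empErr h c m S = (∑ i : Fin m, if h (S i) ≠ c (S i) then (1 : ℝ) else 0) / m := by
  rw [empErr, Finset.card_filter, Nat.cast_sum]
  simp

variable {X : Type*} [TopologicalSpace X] [PolishSpace X] [MeasurableSpace X] [BorelSpace X]
    {Θ₁ Θ₂ S : Type*}
    [MeasurableSpace Θ₁] [StandardBorelSpace Θ₁]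
    [MeasurableSpace Θ₂] [StandardBorelSpace Θ₂]
    [MeasurableSpace S] [StandardBorelSpace S]

lemma badEvent_analytic (π₁ : Θ₁ → S) (π₂ : Θ₂ → S) (hπ₁ : Measurable π₁) (hπ₂ : Measurable π₂)
    (merge : (Θ₁ × Θ₂) × X → Bool) (hmerge : Measurable merge)
    (c : X → Bool) (hc : Measurable c) (m : ℕ) (ε : ℝ) :
    MeasureTheory.AnalyticSet
      (badEvent {h : X → Bool | ∃ (t₁ : Θ₁) (t₂ : Θ₂), π₁ t₁ = π₂ t₂ ∧
        h = fun x => merge ((t₁, t₂), x)} c m ε) := by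
  classical
  set Y := ((Fin m → X) × (Fin m → X))
  set E : Set ((Θ₁ × Θ₂) × Y) :=
    {q | π₁ q.1.1 = π₂ q.1.2 ∧ ghostGap (fun x => merge (q.1, x)) c m q.2 ≥ ε / 2} with hEdef
  -- E is measurable
  have hE : MeasurableSet E := by
    have hA : MeasurableSet {q : (Θ₁ × Θ₂) × Y | π₁ q.1.1 = π₂ q.1.2} := by
      have h1 : Measurable fun q : (Θ₁ × Θ₂) × Y => embeddingReal S (π₁ q.1.1) :=
        (measurable_embeddingReal S).comp (hπ₁.comp (measurable_fst.comp measurable_fst))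
      have h2 : Measurable fun q : (Θ₁ × Θ₂) × Y => embeddingReal S (π₂ q.1.2) :=
        (measurable_embeddingReal S).comp (hπ₂.comp (measurable_snd.comp measurable_fst))
      have heq : {q : (Θ₁ × Θ₂) × Y | π₁ q.1.1 = π₂ q.1.2} =
          {q : (Θ₁ × Θ₂) × Y | embeddingReal S (π₁ q.1.1) = embeddingReal S (π₂ q.1.2)} :=
        Set.ext fun q => ⟨fun h => congrArg _ h,
          fun h => (measurableEmbedding_embeddingReal S).injective h⟩
      rw [heq]
      exact measurableSet_eq_fun h1 h2
    have hB : MeasurableSet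
        {q : (Θ₁ × Θ₂) × Y | ghostGap (fun x => merge (q.1, x)) c m q.2 ≥ ε / 2} := by
      have hemp : ∀ (P : ((Θ₁ × Θ₂) × Y) → Fin m → X) (hP : ∀ i, Measurable fun q => P q i),
          Measurable fun q : (Θ₁ × Θ₂) × Y => empErr (fun x => merge (q.1, x)) c m (P q) := by
        intro P hP
        have : (fun q : (Θ₁ × Θ₂) × Y => empErr (fun x => merge (q.1, x)) c m (P q)) =
            fun q => (∑ i : Fin m, if merge (q.1, P q i) ≠ c (P q i) then (1 : ℝ) else 0) / m := by
          funext q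
          rw [empErr_eq]
        rw [this]
        apply Measurable.div_const
        apply Finset.measurable_sum
        intro i _
        have hs : MeasurableSet {q : (Θ₁ × Θ₂) × Y | merge (q.1, P q i) = c (P q i)} :=
          measurableSet_eq_fun
            (hmerge.comp (measurable_fst.prodMk (hP i))) (hc.comp (hP i))
        exact Measurable.ite hs.compl measurable_const measurable_const
      have hg : Measurable fun q : (Θ₁ × Θ₂) × Y =>
          ghostGap (fun x => merge (q.1, x)) c m q.2 := by
        have h1 := hemp (fun q => q.2.2) (fun i => (measurable_pi_apply i).comp
          (measurable_snd.comp measurable_snd))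
        have h2 := hemp (fun q => q.2.1) (fun i => (measurable_pi_apply i).comp
          (measurable_fst.comp measurable_snd))
        exact h1.sub h2
      exact measurableSet_le measurable_const hg
    exact hA.inter hB
  -- badEvent is the image of E under the projection
  have himg : badEvent {h : X → Bool | ∃ (t₁ : Θ₁) (t₂ : Θ₂), π₁ t₁ = π₂ t₂ ∧
      h = fun x => merge ((t₁, t₂), x)} c m ε = Prod.snd '' E := by
    ext p
    constructor
    · rintro ⟨h, ⟨t₁, t₂, hagree, rfl⟩, hgap⟩
      exact ⟨((t₁, t₂), p), ⟨hagree, hgap⟩, rfl⟩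
    · rintro ⟨⟨⟨t₁, t₂⟩, p'⟩, ⟨hagree, hgap⟩, rfl⟩
      exact ⟨_, ⟨t₁, t₂, hagree, rfl⟩, hgap⟩
  rw [himg]
  exact hE.analyticSet_image measurable_snd

end AmalgAux

/-- Fiber-product amalgamation preserves `WBmeas`: the class of merged hypotheses
over agreeing parameter pairs satisfies `WBmeas`. -/
theorem amalgamation_WBmeas
    {X : Type*} [TopologicalSpace X] [PolishSpace X] [MeasurableSpace X] [BorelSpace X]
    {Θ₁ Θ₂ S : Type*}
    [MeasurableSpace Θ₁] [StandardBorelSpace Θ₁]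
    [MeasurableSpace Θ₂] [StandardBorelSpace Θ₂]
    [MeasurableSpace S] [StandardBorelSpace S]
    (π₁ : Θ₁ → S) (π₂ : Θ₂ → S) (hπ₁ : Measurable π₁) (hπ₂ : Measurable π₂)
    (merge : (Θ₁ × Θ₂) × X → Bool) (hmerge : Measurable merge) :
    WBmeas {h : X → Bool | ∃ (t₁ : Θ₁) (t₂ : Θ₂), π₁ t₁ = π₂ t₂ ∧
      h = fun x => merge ((t₁, t₂), x)} := by
  intro μ hμ c hc m ε hε
  haveI : IsProbabilityMeasure (prodMeas μ m) := by
    unfold prodMeas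
    infer_instance
  exact AmalgAux.analyticSet_nullMeasurableSet
    (AmalgAux.badEvent_analytic π₁ π₂ hπ₁ hπ₂ merge hmerge c hc m ε) (prodMeas μ m)
end
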